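/- For every T ∈ ℕ, the connecting operator C^T = (W^T)ᵀW^T is positive definite and its entries admit the representation in terms of the response vector: C^T_{ij} = Σ_{k=0}^{T−max(i,j)} r_{|i−j|+2k} for 1 ≤ i,j ≤ T, where r_0 = 1. -/

import Mathlib

open scoped BigOperators
open Matrix

/-- Solution `u^f` of the semi-infinite dynamical system. -/
def solS (a b f : ℕ → ℝ) : ℕ → ℕ → ℝ
  | n, 0 => if n = 0 then f 0 else 0
  | n, 1 =>
      if n = 0 then f 1
      else a n * solS a b f (n + 1) 0 + a (n - 1) * solS a b f (n - 1) 0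
        + b n * solS a b f n 0
  | n, t + 2 =>
      if n = 0 then f (t + 2)
      else a n * solS a b f (n + 1) (t + 1) + a (n - 1) * solS a b f (n - 1) (t + 1)
        + b n * solS a b f n (t + 1) - solS a b f n t
  termination_by n t => t

/-- Extension of a finite control by zero. -/
def ctrl (T : ℕ) (f : Fin T → ℝ) : ℕ → ℝ := fun t => if h : t < T then f ⟨t, h⟩ else 0

/-- The control `δ = (1,0,0,…)`. -/
def dctrl : ℕ → ℝ := fun t => if t = 0 then 1 else 0

/-- The response vector: `r_{t-1} = u^δ_{1,t}`, i.e. `respVec a b t = u^δ_{1,t+1}`. -/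
def respVec (a b : ℕ → ℝ) : ℕ → ℝ := fun t => solS a b dctrl 1 (t + 1)

/-- The control operator `W^T : ℝ^T → ℝ^T` as a matrix. -/
def WSemiMat (a b : ℕ → ℝ) (T : ℕ) : Matrix (Fin T) (Fin T) ℝ :=
  Matrix.of fun n j => solS a b (ctrl T (fun k => if k = j then 1 else 0)) ((n : ℕ) + 1) T

/-- Connecting operator `C^T = (W^T)ᵀ W^T`. -/
def CSemiMat (a b : ℕ → ℝ) (T : ℕ) : Matrix (Fin T) (Fin T) ℝ :=
  (WSemiMat a b T)ᵀ * WSemiMat a b T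

section Aux

variable (a b : ℕ → ℝ)

lemma solS_zero (f : ℕ → ℝ) (n : ℕ) : solS a b f (n+1) 0 = 0 := by
  rw [solS]; simp

lemma solS_one (f : ℕ → ℝ) (n : ℕ) : solS a b f (n+1) 1 =
    a (n+1) * solS a b f (n + 2) 0 + a n * solS a b f n 0
      + b (n+1) * solS a b f (n+1) 0 := by
  conv_lhs => rw [solS]
  simp

lemma solS_rec (f : ℕ → ℝ) (n t : ℕ) : solS a b f (n+1) (t+2) =
    a (n+1) * solS a b f (n + 2) (t + 1) + a n * solS a b f n (t + 1)
      + b (n+1) * solS a b f (n+1) (t + 1) - solS a b f (n+1) t := by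
  conv_lhs => rw [solS]
  simp

lemma solS_bdry (f : ℕ → ℝ) (t : ℕ) : solS a b f 0 t = f t := by
  match t with
  | 0 => rw [solS]; simp
  | 1 => rw [solS]; simp
  | t+2 => rw [solS]; simp

/-- Finite propagation speed. -/
lemma uvanish : ∀ t n, t ≤ n → solS a b dctrl (n+1) t = 0 := by
  intro t
  induction t using Nat.strong_induction_on with
  | _ t ih =>
    match t with
    | 0 => intro n _; rw [solS_zero]
    | 1 =>
      intro n h
      obtain ⟨m, rfl⟩ : ∃ m, n = m + 1 := ⟨n - 1, by omega⟩
      rw [solS_one]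
      have h1 : solS a b dctrl (m + 1 + 2) 0 = 0 := solS_zero a b dctrl (m+2)
      have h2 : solS a b dctrl (m + 1) 0 = 0 := solS_zero a b dctrl m
      have h3 : solS a b dctrl (m + 1 + 1) 0 = 0 := solS_zero a b dctrl (m+1)
      rw [h1, h2, h3]; ring
    | t+2 =>
      intro n h
      obtain ⟨m, rfl⟩ : ∃ m, n = m + 1 := ⟨n - 1, by omega⟩
      rw [solS_rec]
      have h1 : solS a b dctrl (m + 1 + 2) (t+1) = 0 := ih (t+1) (by omega) (m+2) (by omega)
      have h2 : solS a b dctrl (m + 1) (t+1) = 0 := ih (t+1) (by omega) m (by omega)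
      have h3 : solS a b dctrl (m + 1 + 1) (t+1) = 0 := ih (t+1) (by omega) (m+1) (by omega)
      have h4 : solS a b dctrl (m + 1 + 1) t = 0 := ih t (by omega) (m+1) (by omega)
      rw [h1, h2, h3, h4]; ring

lemma u0 (t : ℕ) : solS a b dctrl 0 t = if t = 0 then 1 else 0 := by
  rw [solS_bdry]; rfl

/-- Value on the diagonal. -/
lemma udiag : ∀ m : ℕ, solS a b dctrl (m+1) (m+1) = ∏ i ∈ Finset.range (m+1), a i := by
  intro m
  induction m with
  | zero =>
    have h1 : solS a b dctrl 1 1 = a 1 * solS a b dctrl 2 0 + a 0 * solS a b dctrl 0 0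
        + b 1 * solS a b dctrl 1 0 := solS_one a b dctrl 0
    have h2 : solS a b dctrl 2 0 = 0 := solS_zero a b dctrl 1
    have h3 : solS a b dctrl 1 0 = 0 := solS_zero a b dctrl 0
    rw [show (0:ℕ)+1 = 1 from rfl, h1, h2, h3, solS_bdry]
    simp [dctrl]
  | succ m ih =>
    have h : solS a b dctrl (m+1+1) (m+1+1) = a (m+1+1) * solS a b dctrl (m+1+2) (m+1)
        + a (m+1) * solS a b dctrl (m+1) (m+1)
        + b (m+1+1) * solS a b dctrl (m+1+1) (m+1) - solS a b dctrl (m+1+1) m :=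
      solS_rec a b dctrl (m+1) m
    have h1 : solS a b dctrl (m+1+2) (m+1) = 0 := uvanish a b (m+1) (m+2) (by omega)
    have h2 : solS a b dctrl (m+1+1) (m+1) = 0 := uvanish a b (m+1) (m+1) (by omega)
    have h3 : solS a b dctrl (m+1+1) m = 0 := uvanish a b m (m+1) (by omega)
    rw [h, h1, h2, h3, ih]
    conv_rhs => rw [Finset.prod_range_succ]
    ring

/-- Time shift: solution with control `δ_j` is shifted solution with control `δ`. -/
lemma ushift (j : ℕ) : ∀ t n,
    solS a b (fun s => if s = j then (1:ℝ) else 0) n t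
      = if j ≤ t then solS a b dctrl n (t - j) else 0 := by
  set g : ℕ → ℝ := fun s => if s = j then (1:ℝ) else 0 with hg
  intro t
  induction t using Nat.strong_induction_on with
  | _ t ih =>
    match t with
    | 0 =>
      intro n
      match n with
      | 0 =>
        rw [solS_bdry]
        by_cases hj : j = 0
        · subst hj; simp [hg, u0]
        · simp [hg, show (0:ℕ) ≠ j from by omega, show ¬ j ≤ 0 from by omega]
      | n+1 =>
        rw [solS_zero]
        by_cases hj : j = 0
        · subst hj; simp [solS_zero]
        · simp [show ¬ j ≤ 0 from by omega]
    | 1 =>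
      intro n
      match n with
      | 0 =>
        rw [solS_bdry]
        rcases Nat.lt_or_ge j 2 with hj | hj
        · interval_cases j <;> simp [hg, u0]
        · simp [hg, show (1:ℕ) ≠ j from by omega, show ¬ j ≤ 1 from by omega]
      | n+1 =>
        rw [solS_one, ih 0 (by omega) (n+2), ih 0 (by omega) n, ih 0 (by omega) (n+1)]
        rcases Nat.lt_or_ge j 2 with hj | hj
        · interval_cases j
          · have : solS a b dctrl (n+1) 1 = a (n+1) * solS a b dctrl (n + 2) 0
                + a n * solS a b dctrl n 0 + b (n+1) * solS a b dctrl (n+1) 0 :=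
              solS_one a b dctrl n
            simp [this]
          · simp [show ¬ (1:ℕ) ≤ 0 from by omega, solS_zero]
        · simp [show ¬ j ≤ 0 from by omega, show ¬ j ≤ 1 from by omega]
    | t+2 =>
      intro n
      match n with
      | 0 =>
        rw [solS_bdry]
        by_cases hj : j ≤ t + 2
        · rw [if_pos hj, solS_bdry]
          by_cases he : t + 2 = j
          · simp [hg, he, dctrl, show j - j = 0 from by omega]
          · simp [hg, he, dctrl, show ¬ (t + 2 - j = 0) from by omega]
        · rw [if_neg hj]
          simp [hg, show t + 2 ≠ j from by omega]
      | n+1 =>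
        rw [solS_rec, ih (t+1) (by omega) (n+2), ih (t+1) (by omega) n,
          ih (t+1) (by omega) (n+1), ih t (by omega) (n+1)]
        rcases Nat.lt_or_ge (t+2) j with hj | hj
        · simp [show ¬ j ≤ t+1 from by omega, show ¬ j ≤ t from by omega,
            show ¬ j ≤ t+2 from by omega]
        rcases Nat.lt_or_ge t j with hj2 | hj2
        · -- j = t+1 or j = t+2
          rcases (by omega : j = t + 1 ∨ j = t + 2) with rfl | rfl
          · have hs : solS a b dctrl (n+1) 1 = a (n+1) * solS a b dctrl (n + 2) 0
                + a n * solS a b dctrl n 0 + b (n+1) * solS a b dctrl (n+1) 0 :=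
              solS_one a b dctrl n
            simp only [show (t+1) ≤ t+1 from le_refl _, if_pos, show ¬ (t+1) ≤ t from by omega,
              if_neg, show t+1 ≤ t+2 from by omega, show t + 1 - (t+1) = 0 from by omega,
              show t + 2 - (t+1) = 1 from by omega, if_true, if_false]
            rw [hs]; ring
          · simp only [show ¬ t+2 ≤ t+1 from by omega, show ¬ t+2 ≤ t from by omega,
              show t+2 ≤ t+2 from le_refl _, if_true, if_false,
              show t + 2 - (t+2) = 0 from by omega]
            rw [solS_zero]; ring
        · -- j ≤ t
          obtain ⟨d, rfl⟩ : ∃ d, t = j + d := ⟨t - j, by omega⟩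
          simp only [show j ≤ j + d + 1 from by omega, show j ≤ j + d from by omega,
            show j ≤ j + d + 2 from by omega, if_true,
            show j + d + 1 - j = d + 1 from by omega, show j + d - j = d from by omega,
            show j + d + 2 - j = d + 2 from by omega]
          rw [solS_rec]

/-- Inner product of wave snapshots. -/
noncomputable def Fc (s t : ℕ) : ℝ :=
  ∑ n ∈ Finset.range s, solS a b dctrl (n+1) s * solS a b dctrl (n+1) t

lemma Fext (s t N : ℕ) (h : s ≤ N) :
    ∑ n ∈ Finset.range N, solS a b dctrl (n+1) s * solS a b dctrl (n+1) t = Fc a b s t := by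
  rw [Fc]
  refine (Finset.sum_subset (Finset.range_subset_range.2 h) ?_).symm
  intro n hn hns
  simp only [Finset.mem_range] at hn hns
  rw [uvanish a b s n (by omega), zero_mul]

lemma crossLem (p q N : ℕ) (h : p + 2 ≤ N) :
    ∑ n ∈ Finset.range N, a n * solS a b dctrl n (p+1) * solS a b dctrl (n+1) (q+1)
      = ∑ n ∈ Finset.range N,
          a (n+1) * solS a b dctrl (n+1) (p+1) * solS a b dctrl (n+2) (q+1) := by
  obtain ⟨M, rfl⟩ : ∃ M, N = M + 1 := ⟨N - 1, by omega⟩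
  rw [Finset.sum_range_succ' (fun n => a n * solS a b dctrl n (p+1) * solS a b dctrl (n+1) (q+1)) M]
  rw [Finset.sum_range_succ (fun n => a (n+1) * solS a b dctrl (n+1) (p+1) * solS a b dctrl (n+2) (q+1)) M]
  rw [solS_bdry]
  have h1 : dctrl (p+1) = 0 := by simp [dctrl]
  have h2 : solS a b dctrl (M+1) (p+1) = 0 := uvanish a b (p+1) M (by omega)
  rw [h1, h2]
  have hc : ∀ x ∈ Finset.range M,
      a (x+1) * solS a b dctrl (x+1) (p+1) * solS a b dctrl (x+1+1) (q+1)
        = a (x+1) * solS a b dctrl (x+1) (p+1) * solS a b dctrl (x+2) (q+1) :=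
    fun x _ => rfl
  rw [Finset.sum_congr rfl hc]
  ring

/-- The discrete wave identity for `Fc`. -/
lemma wave (s t : ℕ) :
    Fc a b (s+2) (t+1) + Fc a b s (t+1) = Fc a b (s+1) (t+2) + Fc a b (s+1) t := by
  set N := s + t + 3 with hN
  rw [← Fext a b (s+2) (t+1) N (by omega), ← Fext a b s (t+1) N (by omega),
    ← Fext a b (s+1) (t+2) N (by omega), ← Fext a b (s+1) t N (by omega)]
  rw [← Finset.sum_add_distrib, ← Finset.sum_add_distrib]
  have hL : ∀ n ∈ Finset.range N,
      solS a b dctrl (n+1) (s+2) * solS a b dctrl (n+1) (t+1)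
        + solS a b dctrl (n+1) s * solS a b dctrl (n+1) (t+1)
      = a (n+1) * solS a b dctrl (n+1) (t+1) * solS a b dctrl (n+2) (s+1)
        + a n * solS a b dctrl n (s+1) * solS a b dctrl (n+1) (t+1)
        + b (n+1) * (solS a b dctrl (n+1) (s+1) * solS a b dctrl (n+1) (t+1)) := by
    intro n _
    rw [solS_rec a b dctrl n s]
    ring
  have hR : ∀ n ∈ Finset.range N,
      solS a b dctrl (n+1) (s+1) * solS a b dctrl (n+1) (t+2)
        + solS a b dctrl (n+1) (s+1) * solS a b dctrl (n+1) t
      = a (n+1) * solS a b dctrl (n+1) (s+1) * solS a b dctrl (n+2) (t+1)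
        + a n * solS a b dctrl n (t+1) * solS a b dctrl (n+1) (s+1)
        + b (n+1) * (solS a b dctrl (n+1) (s+1) * solS a b dctrl (n+1) (t+1)) := by
    intro n _
    rw [solS_rec a b dctrl n t]
    ring
  rw [Finset.sum_congr rfl hL, Finset.sum_congr rfl hR]
  rw [Finset.sum_add_distrib, Finset.sum_add_distrib, Finset.sum_add_distrib,
    Finset.sum_add_distrib]
  rw [crossLem a b s t N (by omega), ← crossLem a b t s N (by omega)]
  ring

noncomputable def gC (s t : ℕ) : ℝ :=
  ∑ k ∈ Finset.range (min s t), respVec a b ((max s t - min s t) + 2*k)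

lemma sum_shift (e m : ℕ) :
    ∑ k ∈ Finset.range (m+1), respVec a b (e + 2*k)
      = (∑ k ∈ Finset.range m, respVec a b ((e+2) + 2*k)) + respVec a b e := by
  rw [Finset.sum_range_succ' (fun k => respVec a b (e + 2*k)) m]
  congr 1
  refine Finset.sum_congr rfl fun k _ => ?_
  congr 1
  omega

lemma gLe (s t : ℕ) (h : s ≤ t) :
    gC a b s t = ∑ k ∈ Finset.range s, respVec a b ((t - s) + 2*k) := by
  rw [gC, min_eq_left h, max_eq_right h]

lemma gRec (s t : ℕ) :
    gC a b (s+2) (t+1) + gC a b s (t+1) = gC a b (s+1) (t+2) + gC a b (s+1) t := by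
  rcases lt_trichotomy s t with hst | rfl | hst
  · obtain ⟨d, rfl⟩ : ∃ d, t = s + 1 + d := ⟨t - s - 1, by omega⟩
    rw [gLe a b (s+2) (s+1+d+1) (by omega), gLe a b s (s+1+d+1) (by omega),
      gLe a b (s+1) (s+1+d+2) (by omega), gLe a b (s+1) (s+1+d) (by omega)]
    rw [show s+1+d+1 - (s+2) = d from by omega, show s+1+d+1 - s = d + 2 from by omega,
      show s+1+d+2 - (s+1) = d+2 from by omega, show s+1+d - (s+1) = d from by omega]
    rw [sum_shift a b d (s+1), sum_shift a b d s]
    ring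
  · simp only [gC]
    rw [show min (s+2) (s+1) = s+1 from by omega, show max (s+2) (s+1) = s+2 from by omega,
      show min s (s+1) = s from by omega, show max s (s+1) = s+1 from by omega,
      show min (s+1) (s+2) = s+1 from by omega, show max (s+1) (s+2) = s+2 from by omega,
      show min (s+1) s = s from by omega, show max (s+1) s = s+1 from by omega,
      show s+2 - (s+1) = 1 from by omega, show s+1 - s = 1 from by omega]
  · obtain ⟨d, rfl⟩ : ∃ d, s = t + 1 + d := ⟨s - t - 1, by omega⟩
    simp only [gC]
    rw [show min (t+1+d+2) (t+1) = t+1 from by omega,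
      show max (t+1+d+2) (t+1) = t+1+d+2 from by omega,
      show min (t+1+d) (t+1) = t+1 from by omega,
      show max (t+1+d) (t+1) = t+1+d from by omega,
      show min (t+1+d+1) (t+2) = t+2 from by omega,
      show max (t+1+d+1) (t+2) = t+1+d+1 from by omega,
      show min (t+1+d+1) t = t from by omega,
      show max (t+1+d+1) t = t+1+d+1 from by omega]
    rw [show t+1+d+2 - (t+1) = d+2 from by omega, show t+1+d - (t+1) = d from by omega,
      show t+1+d+1 - (t+2) = d from by omega, show t+1+d+1 - t = d+2 from by omega]
    rw [sum_shift a b d (t+1), sum_shift a b d t]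
    ring


/-- Main identity: `Fc = gC`. -/
lemma FG (ha0 : a 0 = 1) : ∀ s t, Fc a b s t = gC a b s t := by
  intro s
  induction s using Nat.strong_induction_on with
  | _ s ih =>
    match s with
    | 0 => intro t; rw [Fc, gC]; simp
    | 1 =>
      intro t
      rw [Fc, Finset.sum_range_one]
      have h1 : solS a b dctrl 1 1 = a 0 := by
        have := udiag a b 0
        rwa [Finset.prod_range_one] at this
      match t with
      | 0 =>
        rw [show (0:ℕ)+1 = 1 from rfl, solS_zero, gC]
        simp
      | t+1 =>
        rw [gC, min_eq_left (by omega : 1 ≤ t+1), max_eq_right (by omega : 1 ≤ t+1),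
          Finset.sum_range_one]
        rw [h1, ha0, one_mul]
        rfl
    | s+2 =>
      intro t
      match t with
      | 0 =>
        rw [Fc, gC]
        have : ∀ n ∈ Finset.range (s+2),
            solS a b dctrl (n+1) (s+2) * solS a b dctrl (n+1) 0 = 0 := by
          intro n _
          rw [solS_zero, mul_zero]
        rw [Finset.sum_congr rfl this]
        simp
      | t+1 =>
        have hw := wave a b s t
        rw [ih (s+1) (by omega) (t+2), ih (s+1) (by omega) t, ih s (by omega) (t+1)] at hw
        have hg := gRec a b s t
        linarith

lemma ctrl_ind (T : ℕ) (j : Fin T) :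
    ctrl T (fun k => if k = j then (1:ℝ) else 0) = fun t => if t = (j:ℕ) then 1 else 0 := by
  funext t
  rw [ctrl]
  by_cases h : t < T
  · simp only [h, dif_pos]
    by_cases he : t = (j:ℕ)
    · simp [he, Fin.ext_iff]
    · simp [he, Fin.ext_iff]
  · have : t ≠ (j:ℕ) := by have := j.isLt; omega
    simp [h, this]

lemma Wval (T : ℕ) (n j : Fin T) :
    WSemiMat a b T n j = solS a b dctrl ((n:ℕ)+1) (T - (j:ℕ)) := by
  rw [WSemiMat]
  show solS a b (ctrl T (fun k => if k = j then 1 else 0)) ((n : ℕ) + 1) T = _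
  rw [ctrl_ind, ushift a b (j:ℕ) T ((n:ℕ)+1), if_pos (by omega : (j:ℕ) ≤ T)]

lemma Centry (T : ℕ) (i j : Fin T) :
    CSemiMat a b T i j = Fc a b (T - (i:ℕ)) (T - (j:ℕ)) := by
  rw [CSemiMat, Matrix.mul_apply]
  have h1 : ∀ n : Fin T, (WSemiMat a b T)ᵀ i n * WSemiMat a b T n j
      = solS a b dctrl ((n:ℕ)+1) (T - (i:ℕ)) * solS a b dctrl ((n:ℕ)+1) (T - (j:ℕ)) := by
    intro n
    rw [Matrix.transpose_apply, Wval, Wval]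
  rw [Finset.sum_congr rfl (fun n _ => h1 n)]
  rw [Fin.sum_univ_eq_sum_range
    (fun n => solS a b dctrl (n+1) (T - (i:ℕ)) * solS a b dctrl (n+1) (T - (j:ℕ))) T]
  exact Fext a b _ _ T (by omega)

lemma Winj (ha0 : a 0 = 1) (hapos : ∀ n, 0 < a n) (T : ℕ) (x : Fin T → ℝ)
    (hx : (WSemiMat a b T) *ᵥ x = 0) : x = 0 := by
  have key : ∀ m : ℕ, ∀ j : Fin T, (j:ℕ) = m → x j = 0 := by
    intro m
    induction m using Nat.strong_induction_on with
    | _ m ih =>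
      intro j hj
      have hTj : (j:ℕ) < T := j.isLt
      set n : Fin T := ⟨T - 1 - (j:ℕ), by omega⟩ with hn
      have hrow : (WSemiMat a b T *ᵥ x) n = 0 := by rw [hx]; rfl
      rw [Matrix.mulVec, dotProduct] at hrow
      have hsingle : ∀ j' : Fin T, j' ≠ j → WSemiMat a b T n j' * x j' = 0 := by
        intro j' hne
        rcases Nat.lt_or_ge (j':ℕ) (j:ℕ) with hlt | hge
        · rw [ih (j':ℕ) (by omega) j' rfl, mul_zero]
        · have hgt : (j:ℕ) < (j':ℕ) := by
            rcases Nat.lt_or_ge (j:ℕ) (j':ℕ) with h | h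
            · exact h
            · exact absurd (Fin.ext (by omega)) hne
          rw [Wval]
          have hv : solS a b dctrl ((n:ℕ)+1) (T - (j':ℕ)) = 0 := by
            have h1 : (n:ℕ) = T - 1 - (j:ℕ) := rfl
            have h2 : T - (j':ℕ) ≤ (n:ℕ) := by omega
            obtain ⟨m', hm'⟩ : ∃ m', (n:ℕ) = m' := ⟨(n:ℕ), rfl⟩
            rw [hm']
            exact uvanish a b (T - (j':ℕ)) m' (by omega)
          rw [hv, zero_mul]
      rw [Finset.sum_eq_single j (fun j' _ hne => hsingle j' hne)
        (fun h => absurd (Finset.mem_univ j) h)] at hrow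
      have hW : WSemiMat a b T n j ≠ 0 := by
        rw [Wval]
        have h1 : (n:ℕ)+1 = T - (j:ℕ) := by
          have : (n:ℕ) = T - 1 - (j:ℕ) := rfl
          omega
        rw [h1]
        obtain ⟨m', hm'⟩ : ∃ m', T - (j:ℕ) = m' + 1 := ⟨T - (j:ℕ) - 1, by omega⟩
        rw [hm', udiag]
        exact ne_of_gt (Finset.prod_pos fun i _ => hapos i)
      have := mul_eq_zero.mp hrow
      tauto
  funext j
  exact key (j:ℕ) j rfl

end Aux

/-- `C^T` is positive definite and
`C^T_{ij} = Σ_{k=0}^{T-max(i,j)} r_{|i-j|+2k}` (1-based `i,j`), with `r_0 = 1`. -/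
theorem connecting_operator_posdef_and_representation
    (a b : ℕ → ℝ) (ha0 : a 0 = 1) (hapos : ∀ n, 0 < a n) (T : ℕ) :
    (CSemiMat a b T).PosDef ∧ respVec a b 0 = 1 ∧
      ∀ i j : Fin T,
        CSemiMat a b T i j
          = ∑ k ∈ Finset.range (T - max (i : ℕ) (j : ℕ)),
              respVec a b ((max (i : ℕ) (j : ℕ) - min (i : ℕ) (j : ℕ)) + 2 * k) := by
  have hr0 : respVec a b 0 = 1 := by
    rw [respVec]
    have := udiag a b 0
    rwa [Finset.prod_range_one, ha0] at this
  refine ⟨?_, hr0, ?_⟩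
  · rw [Matrix.posDef_iff_dotProduct_mulVec]
    constructor
    · -- Hermitian
      rw [Matrix.IsHermitian, CSemiMat]
      rw [show ((WSemiMat a b T)ᵀ * WSemiMat a b T)ᴴ = ((WSemiMat a b T)ᵀ * WSemiMat a b T)ᵀ
        from rfl]
      rw [Matrix.transpose_mul, Matrix.transpose_transpose]
    · intro x hx
      have hC : CSemiMat a b T *ᵥ x = (WSemiMat a b T)ᵀ *ᵥ (WSemiMat a b T *ᵥ x) := by
        rw [CSemiMat, Matrix.mulVec_mulVec]
      rw [hC, show star x = x from rfl, Matrix.dotProduct_mulVec, Matrix.vecMul_transpose]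
      set v := WSemiMat a b T *ᵥ x with hv
      have hvne : v ≠ 0 := fun h => hx (Winj a b ha0 hapos T x h)
      have h0 : v ⬝ᵥ v ≠ 0 := fun h => hvne (dotProduct_self_eq_zero.mp h)
      have hnn : 0 ≤ v ⬝ᵥ v := Finset.sum_nonneg fun i _ => mul_self_nonneg _
      exact lt_of_le_of_ne hnn (Ne.symm h0)
  · intro i j
    rw [Centry, FG a b ha0, gC]
    have hi := i.isLt
    have hj := j.isLt
    rw [show min (T - (i:ℕ)) (T - (j:ℕ)) = T - max (i:ℕ) (j:ℕ) from by omega,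
      show max (T - (i:ℕ)) (T - (j:ℕ)) - (T - max (i:ℕ) (j:ℕ))
        = max (i:ℕ) (j:ℕ) - min (i:ℕ) (j:ℕ) from by omega]
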